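/- (Induction Theorem.) Let G be a finite subgroup of the unit group ℍˣ all of whose elements have norm 1 and with −1 ∈ G, and let Φ ⊂ ℍ be the underlying set of G. Then Φ satisfies the axioms of a root system in Euclidean ℝ⁴ ≅ ℍ: (i) for every q ∈ Φ and c ∈ ℝ, if c·q ∈ Φ then c = 1 or c = −1; (ii) for all q, r ∈ Φ, the reflection r − 2⟪r,q⟫·q belongs to Φ. -/
import Mathlib


open Quaternion RealInnerProductSpace

/-- **Induction Theorem.** If `G` is a finite subgroup of `ℍˣ` all of whose elements have
norm 1 with `-1 ∈ G`, then its underlying set `Φ ⊂ ℍ ≅ ℝ⁴` satisfies the axioms of a root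
system: (i) the only real multiples of a root `q` appearing in `Φ` are `±q`;
(ii) `Φ` is closed under the reflections `r ↦ r − 2⟪r,q⟫·q` for `q ∈ Φ`. -/
theorem induction_theorem (G : Subgroup (ℍ[ℝ])ˣ) (hfin : (G : Set (ℍ[ℝ])ˣ).Finite)
    (hnorm : ∀ g ∈ G, ‖((g : (ℍ[ℝ])ˣ) : ℍ[ℝ])‖ = 1) (hneg : (-1 : (ℍ[ℝ])ˣ) ∈ G)
    (Φ : Set ℍ[ℝ]) (hΦ : Φ = (fun u : (ℍ[ℝ])ˣ => (u : ℍ[ℝ])) '' G) :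
    (∀ q ∈ Φ, ∀ c : ℝ, c • q ∈ Φ → c = 1 ∨ c = -1) ∧
    (∀ q ∈ Φ, ∀ r ∈ Φ, r - (2 * ⟪r, q⟫) • q ∈ Φ) := by
  subst hΦ
  constructor
  · rintro q ⟨uq, huq, rfl⟩ c ⟨u, hu, hcu⟩
    have h1 : ‖((uq : (ℍ[ℝ])ˣ) : ℍ[ℝ])‖ = 1 := hnorm _ huq
    have h2 : ‖(c • ((uq : (ℍ[ℝ])ˣ) : ℍ[ℝ]))‖ = 1 := by rw [← hcu]; exact hnorm _ hu
    rw [norm_smul, h1, mul_one, Real.norm_eq_abs] at h2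
    rcases abs_eq (by norm_num : (0:ℝ) ≤ 1) |>.mp h2 with h | h
    · exact Or.inl h
    · exact Or.inr h
  · rintro q ⟨uq, huq, rfl⟩ r ⟨ur, hur, rfl⟩
    set Q : ℍ[ℝ] := (uq : ℍ[ℝ])
    set R : ℍ[ℝ] := (ur : ℍ[ℝ])
    have hq1 : normSq Q = 1 := by
      rw [normSq_eq_norm_mul_self, hnorm _ huq, mul_one]
    have hr1 : normSq R = 1 := by
      rw [normSq_eq_norm_mul_self, hnorm _ hur, mul_one]
    have hqs : star Q * Q = 1 := by rw [star_mul_self, hq1]; norm_num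
    have hrs : R * star R = 1 := by rw [self_mul_star, hr1]; norm_num
    have hstarR : star R = ((ur⁻¹ : (ℍ[ℝ])ˣ) : ℍ[ℝ]) := by
      rw [Units.val_inv_eq_inv_val]
      exact eq_inv_of_mul_eq_one_right hrs
    have key : R - (2 * ⟪R, Q⟫) • Q = -(Q * star R * Q) := by
      have h2 : ((2 * ⟪R, Q⟫ : ℝ) : ℍ[ℝ]) = R * star Q + Q * star R := by
        rw [inner_def]
        have := self_add_star' (R * star Q)
        rw [star_mul, star_star] at this
        rw [← this]
      have h3 : (2 * ⟪R, Q⟫) • Q = ((2 * ⟪R, Q⟫ : ℝ) : ℍ[ℝ]) * Q := by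
        rw [coe_mul_eq_smul]
      rw [h3, h2, add_mul, mul_assoc R, hqs, mul_one]
      abel
    rw [key]
    exact ⟨(-1) * (uq * (ur⁻¹ * uq)), G.mul_mem hneg (G.mul_mem huq (G.mul_mem (G.inv_mem hur) huq)),
      by simp [Q, hstarR, Units.val_inv_eq_inv_val, mul_assoc]⟩
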